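/- Let k, t be positive integers with t ≤ k, and let p_1^{n_1}···p_m^{n_m} be the prime factorization of gcd(k, t) with M = {1,...,m}. Then the number of t-element subsets A of ZMod k containing 0 whose least period under the shift map equals k is ∑_{S ⊆ M} (−1)^{|S|} C(k/∏_{i∈S} p_i − 1, t/∏_{i∈S} p_i − 1). -/

import Mathlib

open Finset Function

/-- The shift map on finsets of `ZMod m`. -/
def sh (m : ℕ) (A : Finset (ZMod m)) : Finset (ZMod m) := A.image (· + 1)

lemma sh_iterate (k : ℕ) (A : Finset (ZMod k)) (n : ℕ) :
    (sh k)^[n] A = A.image (· + (n : ZMod k)) := by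
  induction n with
  | zero => simp
  | succ n ih =>
    rw [Function.iterate_succ_apply', ih, sh, Finset.image_image]
    congr 1
    funext x
    show x + (n : ZMod k) + 1 = x + ((n + 1 : ℕ) : ZMod k)
    push_cast
    ring

lemma sh_iterate_eq_iff {k : ℕ} (A : Finset (ZMod k)) (n : ℕ) :
    (sh k)^[n] A = A ↔ ∀ x ∈ A, x + (n : ZMod k) ∈ A := by
  rw [sh_iterate]
  constructor
  · intro h x hx
    rw [← h]
    exact Finset.mem_image_of_mem _ hx
  · intro h
    apply Finset.eq_of_subset_of_card_le
    · intro y hy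
      obtain ⟨x, hx, rfl⟩ := Finset.mem_image.mp hy
      exact h x hx
    · exact le_of_eq (Finset.card_image_of_injective _ (add_left_injective _)).symm

lemma mem_add_mul {k : ℕ} {A : Finset (ZMod k)} {m : ℕ}
    (hA : ∀ x ∈ A, x + (m : ZMod k) ∈ A) (c : ℕ) :
    ∀ x ∈ A, x + ((m * c : ℕ) : ZMod k) ∈ A := by
  induction c with
  | zero => simp
  | succ c ih =>
    intro x hx
    have h1 : ((m * (c + 1) : ℕ) : ZMod k) = ((m * c : ℕ) : ZMod k) + (m : ZMod k) := by
      push_cast; ring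
    rw [h1, ← add_assoc]
    exact hA _ (ih x hx)

section cast

variable {k : ℕ} [NeZero k] {m : ℕ}

lemma fiber_card (hm : m ∣ k) (hm0 : m ≠ 0) (b : ZMod m) :
    (univ.filter fun x : ZMod k => ZMod.castHom hm (ZMod m) x = b).card = k / m := by
  haveI : NeZero m := ⟨hm0⟩
  set φ := ZMod.castHom hm (ZMod m) with hφ
  have hsurj : ∀ b : ZMod m, ∃ x : ZMod k, φ x = b := fun b =>
    ⟨(b.val : ZMod k), by rw [map_natCast, ZMod.natCast_rightInverse b]⟩
  have hcard : ∀ b : ZMod m, (univ.filter fun x : ZMod k => φ x = b).card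
      = (univ.filter fun x : ZMod k => φ x = 0).card := by
    intro b
    obtain ⟨x0, hx0⟩ := hsurj b
    apply Finset.card_bij' (fun x _ => x - x0) (fun x _ => x + x0)
    · intro a ha
      simp only [mem_filter, mem_univ, true_and] at ha ⊢
      rw [map_sub, ha, hx0, sub_self]
    · intro a ha
      simp only [mem_filter, mem_univ, true_and] at ha ⊢
      rw [map_add, ha, hx0, zero_add]
    · intro a _; ring
    · intro a _; ring
  have hsum : ∑ b : ZMod m, (univ.filter fun x : ZMod k => φ x = b).card
      = Fintype.card (ZMod k) := by
    rw [← Finset.card_univ]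
    exact (Finset.card_eq_sum_card_fiberwise (fun x _ => mem_univ (φ x))).symm
  rw [ZMod.card] at hsum
  simp only [hcard, Finset.sum_const, Finset.card_univ, ZMod.card, smul_eq_mul] at hsum
  rw [hcard b]
  exact (Nat.div_eq_of_eq_mul_left (Nat.pos_of_ne_zero hm0)
    (by rw [mul_comm] at hsum; exact hsum.symm)).symm

lemma preimage_card (hm : m ∣ k) (hm0 : m ≠ 0) (B : Finset (ZMod m)) :
    (univ.filter fun x : ZMod k => ZMod.castHom hm (ZMod m) x ∈ B).card
      = B.card * (k / m) := by
  set φ := ZMod.castHom hm (ZMod m) with hφ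
  rw [Finset.card_eq_sum_card_fiberwise
    (s := univ.filter fun x : ZMod k => φ x ∈ B) (f := fun x => φ x) (t := B) (fun x hx => (mem_filter.mp hx).2)]
  rw [Finset.sum_congr rfl (fun b hb => ?_), Finset.sum_const, smul_eq_mul]
  rw [Finset.filter_filter, ← fiber_card hm hm0 b]
  congr 1
  ext x
  simp only [mem_filter, mem_univ, true_and, and_iff_right_iff_imp]
  exact ⟨fun h => h.2, fun h => ⟨by rw [hφ, h]; exact hb, h⟩⟩

lemma preimage_image_eq (hm : m ∣ k) (hm0 : m ≠ 0) {A : Finset (ZMod k)}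
    (hA : ∀ x ∈ A, x + (m : ZMod k) ∈ A) :
    univ.filter (fun x : ZMod k =>
      ZMod.castHom hm (ZMod m) x ∈ A.image (ZMod.castHom hm (ZMod m))) = A := by
  haveI : NeZero m := ⟨hm0⟩
  set φ := ZMod.castHom hm (ZMod m) with hφ
  ext x
  simp only [mem_filter, mem_univ, true_and, mem_image]
  constructor
  · rintro ⟨a, ha, hax⟩
    set j := (x - a).val with hj
    have hxa : x = a + (j : ZMod k) := by
      rw [hj, ZMod.natCast_rightInverse (x - a)]; ring
    have hj0 : (j : ZMod m) = 0 := by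
      have h1 : φ x = φ a + (j : ZMod m) := by
        rw [hxa, map_add, map_natCast]
      rw [← hax] at h1
      linear_combination -h1
    obtain ⟨c, hc⟩ := (ZMod.natCast_eq_zero_iff j m).mp hj0
    rw [hxa, hc]
    exact mem_add_mul hA c a ha
  · intro hx; exact ⟨x, hx, rfl⟩

end cast

lemma per_card_eq {k : ℕ} [NeZero k] (t m e : ℕ) [NeZero m] (hme : m * e = k) :
    (univ.filter fun A : Finset (ZMod k) =>
        A.card = t ∧ (0 : ZMod k) ∈ A ∧ (sh k)^[m] A = A).card
      = (univ.filter fun B : Finset (ZMod m) =>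
          B.card * e = t ∧ (0 : ZMod m) ∈ B).card := by
  have hm0 : m ≠ 0 := NeZero.ne m
  have hm : m ∣ k := ⟨e, hme.symm⟩
  have hkm : k / m = e := by rw [← hme, Nat.mul_div_cancel_left _ (Nat.pos_of_ne_zero hm0)]
  set φ := ZMod.castHom hm (ZMod m) with hφ
  have hφm : φ ((m : ℕ) : ZMod k) = 0 := by rw [map_natCast, ZMod.natCast_self]
  refine Finset.card_bij' (fun A _ => A.image φ)
    (fun B _ => univ.filter fun x : ZMod k => φ x ∈ B) ?hi ?hj ?li ?ri
  case hi =>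
    intro A hA
    simp only [mem_filter, mem_univ, true_and] at hA ⊢
    obtain ⟨hcard, h0, hper⟩ := hA
    have hinv : ∀ x ∈ A, x + ((m : ℕ) : ZMod k) ∈ A := (sh_iterate_eq_iff A m).mp hper
    constructor
    · have hpc := preimage_card hm hm0 (A.image φ)
      rw [preimage_image_eq hm hm0 hinv, hkm, hcard] at hpc
      exact hpc.symm
    · have := Finset.mem_image_of_mem φ h0
      rwa [map_zero] at this
  case hj =>
    intro B hB
    simp only [mem_filter, mem_univ, true_and] at hB ⊢
    obtain ⟨hcard, h0⟩ := hB
    refine ⟨by rw [preimage_card hm hm0 B, hkm, hcard], by simpa using h0, ?_⟩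
    rw [sh_iterate_eq_iff]
    intro x hx
    simp only [mem_filter, mem_univ, true_and] at hx ⊢
    rwa [map_add, hφm, add_zero]
  case li =>
    intro A hA
    simp only [mem_filter, mem_univ, true_and] at hA
    exact preimage_image_eq hm hm0 ((sh_iterate_eq_iff A m).mp hA.2.2)
  case ri =>
    intro B hB
    simp only [mem_filter, mem_univ, true_and] at hB
    ext b
    simp only [Finset.mem_image, mem_filter, mem_univ, true_and]
    constructor
    · rintro ⟨x, hx, rfl⟩; exact hx
    · intro hb
      exact ⟨(b.val : ZMod k), by rw [map_natCast, ZMod.natCast_rightInverse b]; exact hb,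
        by rw [map_natCast, ZMod.natCast_rightInverse b]⟩

lemma card_subsets_containing_zero (m s : ℕ) [NeZero m] (hs : 0 < s) :
    (univ.filter fun B : Finset (ZMod m) => B.card = s ∧ (0 : ZMod m) ∈ B).card
      = Nat.choose (m - 1) (s - 1) := by
  have h1 : ((univ : Finset (ZMod m)).erase 0).card = m - 1 := by
    rw [Finset.card_erase_of_mem (mem_univ _), Finset.card_univ, ZMod.card]
  rw [← h1, ← Finset.card_powersetCard]
  refine Finset.card_bij' (fun B _ => B.erase 0) (fun C _ => insert (0 : ZMod m) C)
    ?hi ?hj ?li ?ri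
  case hi =>
    intro B hB
    simp only [mem_filter, mem_univ, true_and] at hB
    rw [Finset.mem_powersetCard]
    exact ⟨Finset.erase_subset_erase _ (Finset.subset_univ B),
      by rw [Finset.card_erase_of_mem hB.2, hB.1]⟩
  case hj =>
    intro C hC
    rw [Finset.mem_powersetCard] at hC
    have h0C : (0 : ZMod m) ∉ C := fun h => (Finset.mem_erase.mp (hC.1 h)).1 rfl
    simp only [mem_filter, mem_univ, true_and]
    refine ⟨?_, Finset.mem_insert_self _ _⟩
    rw [Finset.card_insert_of_notMem h0C, hC.2]
    omega
  case li =>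
    intro B hB
    simp only [mem_filter, mem_univ, true_and] at hB
    exact Finset.insert_erase hB.2
  case ri =>
    intro C hC
    rw [Finset.mem_powersetCard] at hC
    exact Finset.erase_insert (fun h => (Finset.mem_erase.mp (hC.1 h)).1 rfl)

lemma count_iterate_eq_choose {k t e : ℕ} [NeZero k] (ht : 0 < t) (hek : e ∣ k) (het : e ∣ t) :
    (univ.filter fun A : Finset (ZMod k) =>
      A.card = t ∧ (0 : ZMod k) ∈ A ∧ (sh k)^[k / e] A = A).card
      = Nat.choose (k / e - 1) (t / e - 1) := by
  have hk0 : k ≠ 0 := NeZero.ne k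
  have he0 : e ≠ 0 := fun h => hk0 (by simpa [h] using hek)
  have hepos : 0 < e := Nat.pos_of_ne_zero he0
  have hm0 : k / e ≠ 0 :=
    Nat.div_ne_zero_iff.mpr ⟨he0, Nat.le_of_dvd (Nat.pos_of_ne_zero hk0) hek⟩
  haveI : NeZero (k / e) := ⟨hm0⟩
  rw [per_card_eq t (k / e) e (Nat.div_mul_cancel hek)]
  have hconv : (univ.filter fun B : Finset (ZMod (k / e)) =>
      B.card * e = t ∧ (0 : ZMod (k / e)) ∈ B)
      = (univ.filter fun B : Finset (ZMod (k / e)) =>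
          B.card = t / e ∧ (0 : ZMod (k / e)) ∈ B) := by
    ext B
    simp only [mem_filter, mem_univ, true_and]
    constructor
    · rintro ⟨h1, h2⟩
      exact ⟨by rw [← h1, Nat.mul_div_cancel _ hepos], h2⟩
    · rintro ⟨h1, h2⟩
      exact ⟨by rw [h1, Nat.div_mul_cancel het], h2⟩
  rw [hconv, card_subsets_containing_zero _ _ (Nat.div_pos (Nat.le_of_dvd ht het) hepos)]

lemma count_iterate_eq_zero {k t e : ℕ} [NeZero k] (hek : e ∣ k) (het : ¬ e ∣ t) :
    (univ.filter fun A : Finset (ZMod k) =>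
      A.card = t ∧ (0 : ZMod k) ∈ A ∧ (sh k)^[k / e] A = A).card = 0 := by
  have hk0 : k ≠ 0 := NeZero.ne k
  have he0 : e ≠ 0 := fun h => hk0 (by simpa [h] using hek)
  have hm0 : k / e ≠ 0 :=
    Nat.div_ne_zero_iff.mpr ⟨he0, Nat.le_of_dvd (Nat.pos_of_ne_zero hk0) hek⟩
  haveI : NeZero (k / e) := ⟨hm0⟩
  rw [per_card_eq t (k / e) e (Nat.div_mul_cancel hek), Finset.card_eq_zero]
  apply Finset.filter_false_of_mem
  rintro B _ ⟨h1, _⟩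
  exact het ⟨B.card, by rw [← h1, mul_comm]⟩

lemma squarefree_prod_primes {S : Finset ℕ} (h : ∀ p ∈ S, p.Prime) :
    Squarefree (∏ p ∈ S, p) := by
  classical
  induction S using Finset.induction_on with
  | empty => simpa using squarefree_one
  | insert p S hpS ih =>
    rw [Finset.prod_insert hpS]
    have hp : p.Prime := h p (mem_insert_self _ _)
    have hcop : Nat.Coprime p (∏ q ∈ S, q) :=
      Nat.Coprime.prod_right fun q hq =>
        (Nat.coprime_primes hp (h q (mem_insert_of_mem hq))).mpr
          (fun hpq => hpS (hpq ▸ hq))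
    exact (Nat.squarefree_mul hcop).mpr
      ⟨hp.squarefree, ih fun q hq => h q (mem_insert_of_mem hq)⟩

/-- Inclusion-exclusion over the prime factors of `gcd(k,t)`: the number of
`t`-subsets of `ZMod k` containing `0` with least period exactly `k` equals
`∑_{S ⊆ M} (−1)^{|S|} C(k/∏_{i∈S} p_i − 1, t/∏_{i∈S} p_i − 1)`. -/
theorem count_full_period_inclusion_exclusion (k t : ℕ) [NeZero k] (ht : 0 < t)
    (htk : t ≤ k) :
    ((Finset.univ.filter (fun A : Finset (ZMod k) =>
        A.card = t ∧ (0 : ZMod k) ∈ A ∧ Function.minimalPeriod (sh k) A = k)).card : ℤ)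
      = ∑ S ∈ (Nat.gcd k t).primeFactors.powerset,
          (-1) ^ S.card *
            (Nat.choose (k / S.prod id - 1) (t / S.prod id - 1) : ℤ) := by
  classical
  have hk0 : k ≠ 0 := NeZero.ne k
  have hkpos : 0 < k := Nat.pos_of_ne_zero hk0
  have hg0 : Nat.gcd k t ≠ 0 := fun h => hk0 (Nat.eq_zero_of_gcd_eq_zero_left h)
  have key : ∀ n > 0, n ∈ {d : ℕ | d ∣ k} →
      ∑ i ∈ n.divisors,
        ((univ.filter fun A : Finset (ZMod k) =>
          A.card = t ∧ (0 : ZMod k) ∈ A ∧ Function.minimalPeriod (sh k) A = i).card : ℤ)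
      = ((univ.filter fun A : Finset (ZMod k) =>
          A.card = t ∧ (0 : ZMod k) ∈ A ∧ (sh k)^[n] A = A).card : ℤ) := by
    intro n hn _
    have hcard : (univ.filter fun A : Finset (ZMod k) =>
        A.card = t ∧ (0 : ZMod k) ∈ A ∧ (sh k)^[n] A = A).card
        = ∑ r ∈ n.divisors, (univ.filter fun A : Finset (ZMod k) =>
            A.card = t ∧ (0 : ZMod k) ∈ A ∧ Function.minimalPeriod (sh k) A = r).card := by
      rw [Finset.card_eq_sum_card_fiberwise
        (f := fun A => Function.minimalPeriod (sh k) A) (t := n.divisors) ?_]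
      · apply Finset.sum_congr rfl
        intro r hr
        congr 1
        ext A
        simp only [Finset.mem_filter, mem_univ, true_and]
        constructor
        · rintro ⟨⟨h1, h2, _⟩, h4⟩; exact ⟨h1, h2, h4⟩
        · rintro ⟨h1, h2, h3⟩
          refine ⟨⟨h1, h2, ?_⟩, h3⟩
          exact Function.isPeriodicPt_iff_minimalPeriod_dvd.mpr
            (h3 ▸ Nat.dvd_of_mem_divisors hr)
      · intro A hA
        simp only [Finset.coe_filter, Set.mem_setOf_eq, Finset.mem_filter, mem_univ, true_and] at hA
        exact Nat.mem_divisors.mpr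
          ⟨Function.IsPeriodicPt.minimalPeriod_dvd hA.2.2, hn.ne'⟩
    rw [hcard]
    push_cast
    rfl
  have hinv := (ArithmeticFunction.sum_eq_iff_sum_mul_moebius_eq_on {d : ℕ | d ∣ k}
      (fun a b hab hb => hab.trans hb)).mp key k hkpos (dvd_refl k)
  rw [← hinv, Nat.sum_divisorsAntidiagonal
    (f := fun d e => ((Int.cast (ArithmeticFunction.moebius d) : ℤ) * ((univ.filter fun A : Finset (ZMod k) =>
      A.card = t ∧ (0 : ZMod k) ∈ A ∧ (sh k)^[e] A = A).card : ℤ)))]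
  rw [← Finset.sum_filter_of_ne (p := Squarefree)
    (fun d _ hd => by
      by_contra hsq
      exact hd (by rw [ArithmeticFunction.moebius_eq_zero_of_not_squarefree hsq, Int.cast_zero, zero_mul]))]
  rw [show (k.divisors.filter Squarefree) = (k.divisors.filter Squarefree) from rfl]
  have hsub : ∑ d ∈ k.divisors.filter Squarefree,
        (Int.cast (ArithmeticFunction.moebius d) : ℤ) * ((univ.filter fun A : Finset (ZMod k) =>
          A.card = t ∧ (0 : ZMod k) ∈ A ∧ (sh k)^[k / d] A = A).card : ℤ)
      = ∑ d ∈ (Nat.gcd k t).divisors.filter Squarefree,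
        (Int.cast (ArithmeticFunction.moebius d) : ℤ) * ((univ.filter fun A : Finset (ZMod k) =>
          A.card = t ∧ (0 : ZMod k) ∈ A ∧ (sh k)^[k / d] A = A).card : ℤ) := by
    symm
    apply Finset.sum_subset
    · intro d hd
      simp only [Finset.mem_filter, Nat.mem_divisors] at hd ⊢
      exact ⟨⟨hd.1.1.trans (Nat.gcd_dvd_left k t), hk0⟩, hd.2⟩
    · intro d hd hnd
      simp only [Finset.mem_filter, Nat.mem_divisors] at hd hnd
      have hdk : d ∣ k := hd.1.1
      have hdt : ¬ d ∣ t := fun h =>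
        hnd ⟨⟨Nat.dvd_gcd hdk h, hg0⟩, hd.2⟩
      rw [count_iterate_eq_zero hdk hdt]
      simp
  rw [hsub]
  apply Finset.sum_nbij' (i := fun d : ℕ => d.primeFactors)
    (j := fun S : Finset ℕ => S.prod id)
  · intro d hd
    simp only [Finset.mem_filter, Nat.mem_divisors] at hd
    exact Finset.mem_powerset.mpr (Nat.primeFactors_mono hd.1.1 hg0)
  · intro S hS
    rw [Finset.mem_powerset] at hS
    have hSp : ∀ p ∈ S, p.Prime := fun p hp => Nat.prime_of_mem_primeFactors (hS hp)
    simp only [Finset.mem_filter, Nat.mem_divisors]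
    refine ⟨⟨?_, hg0⟩, ?_⟩
    · exact Finset.prod_primes_dvd _ (fun p hp => (hSp p hp).prime)
        (fun p hp => Nat.dvd_of_mem_primeFactors (hS hp))
    · exact squarefree_prod_primes hSp
  · intro d hd
    simp only [Finset.mem_filter] at hd
    exact Nat.prod_primeFactors_of_squarefree hd.2
  · intro S hS
    rw [Finset.mem_powerset] at hS
    exact Nat.primeFactors_prod (fun p hp => Nat.prime_of_mem_primeFactors (hS hp))
  · intro d hd
    simp only [Finset.mem_filter, Nat.mem_divisors] at hd
    obtain ⟨⟨hdg, -⟩, hsq⟩ := hd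
    have hdk : d ∣ k := hdg.trans (Nat.gcd_dvd_left k t)
    have hdt : d ∣ t := hdg.trans (Nat.gcd_dvd_right k t)
    have hprod : (d.primeFactors.prod id) = d := Nat.prod_primeFactors_of_squarefree hsq
    rw [hprod, count_iterate_eq_choose ht hdk hdt]
    congr 1
    have hd0 : d ≠ 0 := hsq.ne_zero
    have hω : d.primeFactors.card = ArithmeticFunction.cardDistinctFactors d := by
      rw [ArithmeticFunction.cardDistinctFactors_apply, Nat.primeFactors,
        List.card_toFinset]
    rw [ArithmeticFunction.moebius_apply_of_squarefree hsq, hω,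
      (ArithmeticFunction.cardDistinctFactors_eq_cardFactors_iff_squarefree hd0).mpr hsq]
    push_cast
    ring
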